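/- Let (G_k)_{k∈ℤ} be measurable functions on ℝ and b > 0 such that ∑_k |G_k(t)| ≤ B a.e. and ∑_k |G_k(t + k/b)| ≤ B a.e. Then for every f ∈ L²(ℝ) the series ∑_k (T_{k/b}f)·G_k converges unconditionally in L²(ℝ)-norm. -/

import Mathlib

open MeasureTheory

private lemma lp_coeFn_finset_sum {α E : Type*} [MeasurableSpace α] {μ : Measure α}
    [NormedAddCommGroup E] {p : ENNReal} {ι : Type*} (s : Finset ι) (g : ι → Lp E p μ) :
    ⇑(∑ i ∈ s, g i) =ᵐ[μ] fun a => ∑ i ∈ s, (g i : α → E) a := by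
  classical
  induction s using Finset.induction_on with
  | empty => simp only [Finset.sum_empty]; exact Lp.coeFn_zero E p μ
  | @insert i s hi ih =>
    rw [Finset.sum_insert hi]
    filter_upwards [Lp.coeFn_add (g i) (∑ j ∈ s, g j), ih] with a ha hia
    simp only [Finset.sum_insert hi, ha, Pi.add_apply, hia]

/-- If `∑_k |G_k(t)| ≤ B` a.e. and `∑_k |G_k(t + k/b)| ≤ B` a.e., then for every
`f ∈ L²(ℝ)` the series `∑_k (T_{k/b}f)·G_k` converges unconditionally in `L²`-norm. -/
theorem stmt14 (b : ℝ) (hb : 0 < b) (G : ℤ → ℝ → ℂ) (hmeas : ∀ k, Measurable (G k)) (B : ℝ)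
    (h1 : ∀ᵐ t : ℝ, ∀ M : Finset ℤ, ∑ k ∈ M, ‖G k t‖ ≤ B)
    (h2 : ∀ᵐ t : ℝ, ∀ M : Finset ℤ, ∑ k ∈ M, ‖G k (t + (k : ℝ) / b)‖ ≤ B) :
    ∀ f : ℝ → ℂ, MemLp f 2 (volume : Measure ℝ) →
      ∃ L : ℝ → ℂ, MemLp L 2 (volume : Measure ℝ) ∧
        ∀ ε : ℝ, 0 < ε → ∃ s : Finset ℤ, ∀ s' : Finset ℤ, s ⊆ s' →
          eLpNorm (fun t => (∑ k ∈ s', f (t - (k : ℝ) / b) * G k t) - L t) 2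
            (volume : Measure ℝ) < ENNReal.ofReal ε := by
  intro f hf
  have hB : 0 ≤ B := by
    obtain ⟨t, ht⟩ := h1.exists
    simpa using ht ∅
  -- `eLpNorm` at `p = 2` as an integral of the squared norm
  have key : ∀ g : ℝ → ℂ,
      eLpNorm g 2 (volume : Measure ℝ)
        = (∫⁻ t, (‖g t‖₊ : ENNReal) ^ 2) ^ (1 / 2 : ℝ) := by
    intro g
    rw [eLpNorm_eq_lintegral_rpow_enorm_toReal (by norm_num) (by norm_num)]
    congr 1
    refine lintegral_congr fun t => ?_
    rw [show ((2 : ENNReal).toReal) = ((2 : ℕ) : ℝ) by norm_num, ENNReal.rpow_natCast, enorm_eq_nnnorm]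
  -- measurability of translated `f` and of the summands
  have htrans : ∀ k : ℤ, AEStronglyMeasurable (fun t => f (t - (k : ℝ) / b)) volume :=
    fun k => hf.1.comp_quasiMeasurePreserving
      (measurePreserving_sub_right volume ((k : ℝ) / b)).quasiMeasurePreserving
  have hterm_meas : ∀ k : ℤ, AEStronglyMeasurable (fun t => f (t - (k : ℝ) / b) * G k t) volume :=
    fun k => (htrans k).mul (hmeas k).aestronglyMeasurable
  set c : ℤ → ENNReal :=
    fun k => ∫⁻ t, (‖f t‖₊ : ENNReal) ^ 2 * (‖G k (t + (k : ℝ) / b)‖₊ : ENNReal) with hc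
  have hA1 : ∀ k : ℤ, AEMeasurable
      (fun t => (‖f (t - (k : ℝ) / b)‖₊ : ENNReal) ^ 2 * (‖G k t‖₊ : ENNReal)) volume :=
    fun k => ((htrans k).enorm.pow_const 2).mul (hmeas k).enorm.aemeasurable
  have hA2 : ∀ k : ℤ, AEMeasurable
      (fun t => (‖f t‖₊ : ENNReal) ^ 2 * (‖G k (t + (k : ℝ) / b)‖₊ : ENNReal)) volume :=
    fun k => (hf.1.enorm.pow_const 2).mul
      ((hmeas k).comp (measurable_add_const _)).enorm.aemeasurable
  -- Step 1: the basic estimate for finite partial sums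
  have step1 : ∀ M : Finset ℤ,
      (∫⁻ t, (‖∑ k ∈ M, f (t - (k : ℝ) / b) * G k t‖₊ : ENNReal) ^ 2)
        ≤ ENNReal.ofReal B * ∑ k ∈ M, c k := by
    intro M
    have hpt : ∀ᵐ t : ℝ, (‖∑ k ∈ M, f (t - (k : ℝ) / b) * G k t‖₊ : ENNReal) ^ 2
        ≤ ENNReal.ofReal B *
          ∑ k ∈ M, (‖f (t - (k : ℝ) / b)‖₊ : ENNReal) ^ 2 * (‖G k t‖₊ : ENNReal) := by
      filter_upwards [h1] with t ht
      have hre : ‖∑ k ∈ M, f (t - (k : ℝ) / b) * G k t‖ ^ 2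
          ≤ B * ∑ k ∈ M, ‖f (t - (k : ℝ) / b)‖ ^ 2 * ‖G k t‖ := by
        calc ‖∑ k ∈ M, f (t - (k : ℝ) / b) * G k t‖ ^ 2
            ≤ (∑ k ∈ M, ‖f (t - (k : ℝ) / b)‖ * ‖G k t‖) ^ 2 := by
              have h := (norm_sum_le M fun k => f (t - (k : ℝ) / b) * G k t).trans
                (le_of_eq (Finset.sum_congr rfl fun k _ => norm_mul _ _))
              exact pow_le_pow_left₀ (norm_nonneg _) h 2
          _ ≤ (∑ k ∈ M, ‖G k t‖) * ∑ k ∈ M, ‖f (t - (k : ℝ) / b)‖ ^ 2 * ‖G k t‖ :=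
              Finset.sum_sq_le_sum_mul_sum_of_sq_eq_mul M
                (fun k _ => norm_nonneg _)
                (fun k _ => mul_nonneg (sq_nonneg _) (norm_nonneg _))
                (fun k _ => by ring)
          _ ≤ B * ∑ k ∈ M, ‖f (t - (k : ℝ) / b)‖ ^ 2 * ‖G k t‖ :=
              mul_le_mul_of_nonneg_right (ht M)
                (Finset.sum_nonneg fun k _ => mul_nonneg (sq_nonneg _) (norm_nonneg _))
      calc (‖∑ k ∈ M, f (t - (k : ℝ) / b) * G k t‖₊ : ENNReal) ^ 2
          = ENNReal.ofReal (‖∑ k ∈ M, f (t - (k : ℝ) / b) * G k t‖ ^ 2) := by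
            rw [ENNReal.ofReal_pow (norm_nonneg _), ofReal_norm_eq_enorm, enorm_eq_nnnorm]
        _ ≤ ENNReal.ofReal (B * ∑ k ∈ M, ‖f (t - (k : ℝ) / b)‖ ^ 2 * ‖G k t‖) :=
            ENNReal.ofReal_le_ofReal hre
        _ = ENNReal.ofReal B *
            ∑ k ∈ M, (‖f (t - (k : ℝ) / b)‖₊ : ENNReal) ^ 2 * (‖G k t‖₊ : ENNReal) := by
            rw [ENNReal.ofReal_mul hB,
              ENNReal.ofReal_sum_of_nonneg
                (fun k _ => mul_nonneg (sq_nonneg _) (norm_nonneg _))]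
            congr 1
            refine Finset.sum_congr rfl fun k _ => ?_
            rw [ENNReal.ofReal_mul (sq_nonneg _), ENNReal.ofReal_pow (norm_nonneg _),
              ofReal_norm_eq_enorm, ofReal_norm_eq_enorm, enorm_eq_nnnorm, enorm_eq_nnnorm]
    calc (∫⁻ t, (‖∑ k ∈ M, f (t - (k : ℝ) / b) * G k t‖₊ : ENNReal) ^ 2)
        ≤ ∫⁻ t, ENNReal.ofReal B *
            ∑ k ∈ M, (‖f (t - (k : ℝ) / b)‖₊ : ENNReal) ^ 2 * (‖G k t‖₊ : ENNReal) :=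
          lintegral_mono_ae hpt
      _ = ENNReal.ofReal B * ∑ k ∈ M,
            ∫⁻ t, (‖f (t - (k : ℝ) / b)‖₊ : ENNReal) ^ 2 * (‖G k t‖₊ : ENNReal) := by
          rw [lintegral_const_mul' _ _ ENNReal.ofReal_ne_top,
            lintegral_finset_sum' M fun k _ => hA1 k]
      _ = ENNReal.ofReal B * ∑ k ∈ M, c k := by
          congr 1
          refine Finset.sum_congr rfl fun k _ => ?_
          rw [← lintegral_add_right_eq_self
            (fun t => (‖f (t - (k : ℝ) / b)‖₊ : ENNReal) ^ 2 * (‖G k t‖₊ : ENNReal))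
            ((k : ℝ) / b)]
          simp only [add_sub_cancel_right, hc]
  -- integrability of `f` squared
  have hI : (∫⁻ t, (‖f t‖₊ : ENNReal) ^ 2) ≠ ⊤ := by
    intro h
    have h2' := hf.2
    rw [key f, h, ENNReal.top_rpow_of_pos (by norm_num)] at h2'
    exact lt_irrefl _ h2'
  -- Step 2: the total mass of `c` is finite
  have step2 : (∑' k, c k) ≤ ENNReal.ofReal B * ∫⁻ t, (‖f t‖₊ : ENNReal) ^ 2 := by
    rw [ENNReal.tsum_eq_iSup_sum]
    refine iSup_le fun M => ?_
    calc (∑ k ∈ M, c k)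
        = ∫⁻ t, ∑ k ∈ M, (‖f t‖₊ : ENNReal) ^ 2 * (‖G k (t + (k : ℝ) / b)‖₊ : ENNReal) :=
          (lintegral_finset_sum' M fun k _ => hA2 k).symm
      _ ≤ ∫⁻ t, ENNReal.ofReal B * (‖f t‖₊ : ENNReal) ^ 2 := by
          refine lintegral_mono_ae ?_
          filter_upwards [h2] with t ht
          rw [← Finset.mul_sum, mul_comm]
          gcongr
          calc (∑ k ∈ M, (‖G k (t + (k : ℝ) / b)‖₊ : ENNReal))
              = ENNReal.ofReal (∑ k ∈ M, ‖G k (t + (k : ℝ) / b)‖) := by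
                rw [ENNReal.ofReal_sum_of_nonneg fun k _ => norm_nonneg _]
                exact Finset.sum_congr rfl fun k _ => (ofReal_norm_eq_enorm _).symm
            _ ≤ ENNReal.ofReal B := ENNReal.ofReal_le_ofReal (ht M)
      _ = ENNReal.ofReal B * ∫⁻ t, (‖f t‖₊ : ENNReal) ^ 2 :=
          lintegral_const_mul' _ _ ENNReal.ofReal_ne_top
  have htsum : (∑' k, c k) ≠ ⊤ :=
    ne_top_of_le_ne_top (ENNReal.mul_ne_top ENNReal.ofReal_ne_top hI) step2
  have hck : ∀ k, c k ≠ ⊤ := fun k => ne_top_of_le_ne_top htsum (ENNReal.le_tsum k)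
  set r : ℤ → ℝ := fun k => (c k).toReal with hrdef
  have hr : Summable r := ENNReal.summable_toReal htsum
  have hr0 : ∀ k, 0 ≤ r k := fun k => ENNReal.toReal_nonneg
  have hcr : ∀ k, c k = ENNReal.ofReal (r k) := fun k => (ENNReal.ofReal_toReal (hck k)).symm
  -- each summand is in L²
  have hmem1 : ∀ k : ℤ, MemLp (fun t => f (t - (k : ℝ) / b) * G k t) 2 (volume : Measure ℝ) := by
    intro k
    refine ⟨hterm_meas k, ?_⟩
    rw [key]
    refine ENNReal.rpow_lt_top_of_nonneg (by norm_num) ?_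
    have h := step1 {k}
    simp only [Finset.sum_singleton] at h
    exact ne_top_of_le_ne_top (ENNReal.mul_ne_top ENNReal.ofReal_ne_top (hck k)) h
  set g : ℤ → Lp ℂ 2 (volume : Measure ℝ) := fun k => (hmem1 k).toLp _ with hgdef
  have hgsum : ∀ M : Finset ℤ,
      ⇑(∑ k ∈ M, g k) =ᵐ[volume] fun t => ∑ k ∈ M, f (t - (k : ℝ) / b) * G k t := by
    intro M
    refine (lp_coeFn_finset_sum M g).trans ?_
    have hall : ∀ᵐ a : ℝ, ∀ k ∈ (M : Set ℤ), (g k : ℝ → ℂ) a = f (a - (k : ℝ) / b) * G k a := by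
      rw [ae_ball_iff M.countable_toSet]
      intro k _
      exact (hmem1 k).coeFn_toLp
    filter_upwards [hall] with a ha
    exact Finset.sum_congr rfl fun k hk => ha k hk
  have hbound : ∀ M : Finset ℤ,
      eLpNorm (fun t => ∑ k ∈ M, f (t - (k : ℝ) / b) * G k t) 2 (volume : Measure ℝ)
        ≤ (ENNReal.ofReal B * ∑ k ∈ M, c k) ^ (1 / 2 : ℝ) := by
    intro M
    rw [key]
    exact ENNReal.rpow_le_rpow (step1 M) (by norm_num)
  -- summability of `g` in L²
  have hsummable : Summable g := by
    rw [summable_iff_vanishing]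
    intro e he
    obtain ⟨ε, hε, hball⟩ := Metric.mem_nhds_iff.1 he
    obtain ⟨s, hs⟩ := (summable_iff_vanishing.1 hr) (Metric.ball 0 (ε ^ 2 / (B + 1)))
      (Metric.ball_mem_nhds 0 (by positivity))
    refine ⟨s, fun M hM => ?_⟩
    apply hball
    rw [Metric.mem_ball, dist_zero_right]
    have h1' := hs M hM
    rw [Metric.mem_ball, dist_zero_right, Real.norm_eq_abs] at h1'
    have hsum_nonneg : 0 ≤ ∑ k ∈ M, r k := Finset.sum_nonneg fun k _ => hr0 k
    have h1'' : ∑ k ∈ M, r k < ε ^ 2 / (B + 1) := by rwa [abs_of_nonneg hsum_nonneg] at h1'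
    have hBs : B * ∑ k ∈ M, r k < ε ^ 2 := by
      calc B * ∑ k ∈ M, r k ≤ (B + 1) * ∑ k ∈ M, r k := by nlinarith
        _ < (B + 1) * (ε ^ 2 / (B + 1)) := by
            have hB1 : (0 : ℝ) < B + 1 := by linarith
            exact (mul_lt_mul_iff_right₀ hB1).2 h1''
        _ = ε ^ 2 := by field_simp
    have hnorm : ‖∑ k ∈ M, g k‖
        = (eLpNorm (fun t => ∑ k ∈ M, f (t - (k : ℝ) / b) * G k t) 2
            (volume : Measure ℝ)).toReal := by
      rw [Lp.norm_def]
      congr 1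
      exact eLpNorm_congr_ae (hgsum M)
    rw [hnorm]
    refine ENNReal.toReal_lt_of_lt_ofReal ?_
    refine lt_of_le_of_lt (hbound M) ?_
    have hre : ENNReal.ofReal B * ∑ k ∈ M, c k = ENNReal.ofReal (B * ∑ k ∈ M, r k) := by
      rw [ENNReal.ofReal_mul hB, ENNReal.ofReal_sum_of_nonneg fun k _ => hr0 k]
      congr 1
      exact Finset.sum_congr rfl fun k _ => hcr k
    rw [hre]
    calc ENNReal.ofReal (B * ∑ k ∈ M, r k) ^ (1 / 2 : ℝ)
        < ENNReal.ofReal (ε ^ 2) ^ (1 / 2 : ℝ) := by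
          refine ENNReal.rpow_lt_rpow ?_ (by norm_num)
          exact (ENNReal.ofReal_lt_ofReal_iff (by positivity)).2 hBs
      _ = ENNReal.ofReal ε := by
          rw [ENNReal.ofReal_rpow_of_nonneg (sq_nonneg _) (by norm_num)]
          congr 1
          rw [← Real.rpow_natCast ε 2, ← Real.rpow_mul hε.le]
          norm_num
  obtain ⟨S, hS⟩ := hsummable
  refine ⟨S, Lp.memLp S, fun ε hε => ?_⟩
  have htend : ∀ᶠ M in Filter.atTop, dist (∑ k ∈ M, g k) S < ε :=
    Metric.tendsto_nhds.1 hS ε hε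
  rw [Filter.eventually_atTop] at htend
  obtain ⟨s, hs⟩ := htend
  refine ⟨s, fun s' hs' => ?_⟩
  have hd := hs s' hs'
  rw [dist_eq_norm] at hd
  have hae : (fun t => (∑ k ∈ s', f (t - (k : ℝ) / b) * G k t) - S t)
      =ᵐ[volume] ⇑((∑ k ∈ s', g k) - S) := by
    filter_upwards [Lp.coeFn_sub (∑ k ∈ s', g k) S, hgsum s'] with t h₁ h₂
    rw [h₁, Pi.sub_apply, h₂]
  rw [eLpNorm_congr_ae hae]
  have heq : eLpNorm (⇑((∑ k ∈ s', g k) - S)) 2 (volume : Measure ℝ)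
      = ENNReal.ofReal ‖(∑ k ∈ s', g k) - S‖ := by
    rw [Lp.norm_def, ENNReal.ofReal_toReal (Lp.eLpNorm_ne_top _)]
  rw [heq]
  exact (ENNReal.ofReal_lt_ofReal_iff hε).2 hd
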